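/- Let V be a d×d real symmetric positive definite matrix, let u ∈ ℝᵈ satisfy ‖u‖₂ ≤ 1, and let p ∈ (0, 1]. Then ‖u‖_{V⁻¹}^{2p} ≤ (2 log(det(V + u uᵀ)/det V))^p + (3/(2p)) (tr(V^{−p}) − tr((V + u uᵀ)^{−p})). -/

import Mathlib

open Matrix

/-- The Mahalanobis norm `‖x‖_B = √(xᵀ B x)`. -/
noncomputable def mnorm {d : ℕ} (B : Matrix (Fin d) (Fin d) ℝ) (x : Fin d → ℝ) : ℝ :=
  Real.sqrt (x ⬝ᵥ B *ᵥ x)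

/-- Real matrix power of a symmetric matrix, via the spectral decomposition
(junk value `0` on non-Hermitian matrices). -/
noncomputable def mpow {d : ℕ} (A : Matrix (Fin d) (Fin d) ℝ) (q : ℝ) :
    Matrix (Fin d) (Fin d) ℝ :=
  if hA : A.IsHermitian then
    (hA.eigenvectorUnitary : Matrix (Fin d) (Fin d) ℝ) *
      Matrix.diagonal (fun i => hA.eigenvalues i ^ q) *
      star (hA.eigenvectorUnitary : Matrix (Fin d) (Fin d) ℝ)
  else 0


section Helpers

variable {d : ℕ}


lemma rpow_le_tangent {x m p : ℝ} (hx : 0 < x) (hm : 0 < m) (hp0 : 0 ≤ p) (hp1 : p ≤ 1) :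
    x ^ p ≤ m ^ p + p * m ^ (p - 1) * (x - m) := by
  have h := rpow_one_add_le_one_add_mul_self (s := x / m - 1) (by
    have : 0 < x / m := div_pos hx hm
    linarith) hp0 hp1
  rw [add_sub_cancel] at h
  rw [Real.div_rpow hx.le hm.le p] at h
  have hmp : (0:ℝ) < m ^ p := Real.rpow_pos_of_pos hm p
  have h2 : x ^ p ≤ m ^ p * (1 + p * (x / m - 1)) := by
    rw [div_le_iff₀ hmp] at h; linarith [h]
  calc x ^ p ≤ m ^ p * (1 + p * (x / m - 1)) := h2
    _ = m ^ p + p * (m ^ p / m) * (x - m) := by field_simp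
    _ = m ^ p + p * m ^ (p - 1) * (x - m) := by rw [← Real.rpow_sub_one hm.ne']

lemma tangent_le_rpow {x m q : ℝ} (hx : 0 ≤ x) (hm : 0 < m) (hq : 1 ≤ q) :
    m ^ q + q * m ^ (q - 1) * (x - m) ≤ x ^ q := by
  have h := one_add_mul_self_le_rpow_one_add (s := x / m - 1) (by
    have : 0 ≤ x / m := div_nonneg hx hm.le
    linarith) hq
  rw [add_sub_cancel] at h
  rw [Real.div_rpow hx hm.le q] at h
  have hmp : (0:ℝ) < m ^ q := Real.rpow_pos_of_pos hm q
  have h2 : m ^ q * (1 + q * (x / m - 1)) ≤ x ^ q := by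
    rw [le_div_iff₀ hmp] at h; linarith [h]
  calc m ^ q + q * m ^ (q - 1) * (x - m)
      = m ^ q + q * (m ^ q / m) * (x - m) := by rw [← Real.rpow_sub_one hm.ne']
    _ = m ^ q * (1 + q * (x / m - 1)) := by field_simp
    _ ≤ x ^ q := h2

section

lemma jensen_upper (b μ : Fin d → ℝ) (hμ : ∀ k, 0 < μ k)
    (hb : ∑ k, (b k) ^ 2 = 1) {p : ℝ} (hp0 : 0 < p) (hp1 : p ≤ 1) :
    ∑ k, (b k) ^ 2 * μ k ^ (-p) ≤ (∑ k, (b k) ^ 2 * (μ k)⁻¹) ^ p := by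
  set m : ℝ := ∑ k, (b k) ^ 2 * (μ k)⁻¹ with hm_def
  have hterm : ∀ k, (0:ℝ) ≤ (b k) ^ 2 * (μ k)⁻¹ := fun k =>
    mul_nonneg (sq_nonneg _) (inv_nonneg.2 (hμ k).le)
  have hm_pos : 0 < m := by
    rcases (Finset.sum_nonneg (fun k (_ : k ∈ Finset.univ) => hterm k)).lt_or_eq with h | h
    · exact h
    · exfalso
      have hz := (Finset.sum_eq_zero_iff_of_nonneg (fun k _ => hterm k)).1 h.symm
      have hb0 : ∀ k, (b k) ^ 2 = 0 := fun k =>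
        (mul_eq_zero.1 (hz k (Finset.mem_univ k))).resolve_right (inv_ne_zero (hμ k).ne')
      rw [Finset.sum_congr rfl (fun k _ => hb0 k)] at hb
      simp at hb
  calc ∑ k, (b k) ^ 2 * μ k ^ (-p)
      ≤ ∑ k, (b k) ^ 2 * (m ^ p + p * m ^ (p - 1) * ((μ k)⁻¹ - m)) := by
        apply Finset.sum_le_sum
        intro k _
        apply mul_le_mul_of_nonneg_left _ (sq_nonneg _)
        rw [Real.rpow_neg (hμ k).le, ← Real.inv_rpow (hμ k).le]
        exact rpow_le_tangent (inv_pos.2 (hμ k)) hm_pos hp0.le hp1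
    _ = ∑ k, (m ^ p * (b k) ^ 2 + p * m ^ (p - 1) * ((b k) ^ 2 * (μ k)⁻¹)
          - p * m ^ (p - 1) * m * (b k) ^ 2) := Finset.sum_congr rfl (fun k _ => by ring)
    _ = m ^ p * ∑ k, (b k) ^ 2 + p * m ^ (p - 1) * ∑ k, ((b k) ^ 2 * (μ k)⁻¹)
          - p * m ^ (p - 1) * m * ∑ k, (b k) ^ 2 := by
        rw [Finset.sum_sub_distrib, Finset.sum_add_distrib, Finset.mul_sum, Finset.mul_sum,
          Finset.mul_sum]
    _ = m ^ p := by rw [hb, ← hm_def]; ring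

lemma jensen_lower (c lam : Fin d → ℝ) (hc : ∀ k, 0 ≤ c k) (hlam : ∀ k, 0 < lam k)
    (hc1 : ∑ k, c k ≤ 1) {q : ℝ} (hq : 1 ≤ q)
    (hs : 0 < ∑ k, c k * (lam k)⁻¹) :
    (∑ k, c k * (lam k)⁻¹) ^ q ≤ ∑ k, c k * (lam k) ^ (-q) := by
  set m : ℝ := ∑ k, c k * (lam k)⁻¹ with hm_def
  have hmq : (0:ℝ) < m ^ q := Real.rpow_pos_of_pos hs q
  have hcsum : (0:ℝ) ≤ ∑ k, c k := Finset.sum_nonneg (fun k _ => hc k)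
  calc (∑ k, c k * (lam k)⁻¹) ^ q = m ^ q := rfl
    _ ≤ m ^ q * (∑ k, c k) + q * m ^ (q - 1) * (m - m * ∑ k, c k) := by
        have h1 : m ^ q * (1 - ∑ k, c k) ≤ q * (m ^ (q - 1) * m) * (1 - ∑ k, c k) := by
          apply mul_le_mul_of_nonneg_right _ (by linarith)
          rw [← Real.rpow_add_one hs.ne']
          rw [sub_add_cancel]
          nlinarith [hmq]
        nlinarith [h1]
    _ = ∑ k, (m ^ q * c k + q * m ^ (q - 1) * (c k * (lam k)⁻¹)
          - q * m ^ (q - 1) * m * c k) := by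
        rw [Finset.sum_sub_distrib, Finset.sum_add_distrib, ← Finset.mul_sum, ← Finset.mul_sum,
          ← Finset.mul_sum, ← hm_def]
        ring
    _ ≤ ∑ k, c k * (lam k) ^ (-q) := by
        apply Finset.sum_le_sum
        intro k _
        have h := tangent_le_rpow (x := (lam k)⁻¹) (inv_pos.2 (hlam k)).le hs hq
        rw [Real.rpow_neg (hlam k).le, ← Real.inv_rpow (hlam k).le]
        calc m ^ q * c k + q * m ^ (q - 1) * (c k * (lam k)⁻¹) - q * m ^ (q - 1) * m * c k
            = c k * (m ^ q + q * m ^ (q - 1) * ((lam k)⁻¹ - m)) := by ring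
          _ ≤ c k * ((lam k)⁻¹) ^ q := mul_le_mul_of_nonneg_left h (hc k)

end

lemma scalar_key {s p : ℝ} (hs : 0 ≤ s) (hp0 : 0 < p) (hp1 : p ≤ 1) :
    s ^ p ≤ (2 * Real.log (1 + s)) ^ p + 3 / 2 * (s ^ (1 + p) / (1 + s)) := by
  have h1s : (0:ℝ) < 1 + s := by linarith
  have hlog0 : 0 ≤ Real.log (1 + s) := Real.log_nonneg (by linarith)
  have hsp : (0:ℝ) ≤ s ^ p := Real.rpow_nonneg hs p
  have hs1p : (0:ℝ) ≤ s ^ (1 + p) := Real.rpow_nonneg hs _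
  rcases le_or_gt s 1 with hle | hgt
  · -- s ≤ 1 : use 2 log(1+s) ≥ s
    have hexp : Real.exp (s / 2) ≤ 1 + s := by
      have h1 : (-(s / 2)) + 1 ≤ Real.exp (-(s / 2)) := Real.add_one_le_exp _
      have h2 : 0 < 1 - s / 2 := by linarith
      have h3 : Real.exp (s / 2) = (Real.exp (-(s / 2)))⁻¹ := by
        rw [← Real.exp_neg, neg_neg]
      rw [h3]
      have h4 : (Real.exp (-(s / 2)))⁻¹ ≤ (1 - s / 2)⁻¹ := by
        apply inv_anti₀ h2
        linarith [h1]
      apply h4.trans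
      rw [inv_le_iff_one_le_mul₀ h2]
      nlinarith
    have hlog : s ≤ 2 * Real.log (1 + s) := by
      have := (Real.le_log_iff_exp_le h1s).2 hexp
      linarith
    have : s ^ p ≤ (2 * Real.log (1 + s)) ^ p := Real.rpow_le_rpow hs hlog hp0.le
    have hpos : 0 ≤ 3 / 2 * (s ^ (1 + p) / (1 + s)) := by positivity
    linarith
  · have hs0 : (0:ℝ) < s := lt_trans one_pos hgt
    have hsplit : s ^ (1 + p) = s * s ^ p := by
      rw [Real.rpow_add hs0, Real.rpow_one]
    have hlog2 : 1 ≤ 2 * Real.log (1 + s) := by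
      have h2 : Real.log 2 ≤ Real.log (1 + s) := Real.log_le_log (by norm_num) (by linarith)
      have := Real.log_two_gt_d9
      linarith
    have hone : (1:ℝ) ≤ (2 * Real.log (1 + s)) ^ p := by
      have := Real.rpow_le_rpow (by norm_num : (0:ℝ) ≤ 1) hlog2 hp0.le
      rwa [Real.one_rpow] at this
    rcases le_or_gt s 2 with hle2 | hgt2
    · -- 1 < s ≤ 2 : s^p (1 - s/2)/(1+s) ≤ 1
      have hsp2 : s ^ p ≤ 2 := by
        calc s ^ p ≤ 2 ^ p := Real.rpow_le_rpow hs hle2 hp0.le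
          _ ≤ 2 ^ (1:ℝ) := Real.rpow_le_rpow_of_exponent_le (by norm_num) hp1
          _ = 2 := Real.rpow_one 2
      rw [hsplit]
      have ht : 3 / 2 * (s * s ^ p / (1 + s)) = 3 / 2 * s * s ^ p / (1 + s) := by ring
      rw [ht]
      have key : s ^ p ≤ 1 + 3 / 2 * s * s ^ p / (1 + s) := by
        rw [← sub_le_iff_le_add', le_div_iff₀ h1s]
        nlinarith
      linarith
    · -- s > 2 : 3/2 * s/(1+s) ≥ 1
      have hlogp0 : 0 ≤ (2 * Real.log (1 + s)) ^ p := Real.rpow_nonneg (by linarith) p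
      rw [hsplit]
      have ht : 3 / 2 * (s * s ^ p / (1 + s)) = 3 / 2 * s * s ^ p / (1 + s) := by ring
      rw [ht]
      have : s ^ p ≤ 3 / 2 * s * s ^ p / (1 + s) := by
        rw [le_div_iff₀ h1s]
        nlinarith
      linarith



lemma star_eq_transpose_real (P : Matrix (Fin d) (Fin d) ℝ) : star P = Pᵀ := by
  ext i j; simp [Matrix.star_apply]

/-- quadratic form through a spectral-type decomposition -/
lemma quadform_spectral (P : Matrix (Fin d) (Fin d) ℝ) (f : Fin d → ℝ) (x : Fin d → ℝ) :
    x ⬝ᵥ (P * diagonal f * star P) *ᵥ x = ∑ k, f k * ((star P *ᵥ x) k) ^ 2 := by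
  rw [star_eq_transpose_real]
  rw [← mulVec_mulVec, ← mulVec_mulVec, dotProduct_mulVec]
  have hvm : x ᵥ* P = Pᵀ *ᵥ x := by rw [← vecMul_transpose, transpose_transpose]
  rw [hvm]
  simp only [dotProduct, mulVec_diagonal]
  exact Finset.sum_congr rfl (fun k _ => by ring)

/-- sum of squares of coordinates in an orthogonal change of basis -/
lemma sum_sq_star_mulVec (P : Matrix (Fin d) (Fin d) ℝ) (hP : P * star P = 1)
    (x : Fin d → ℝ) : ∑ k, ((star P *ᵥ x) k) ^ 2 = x ⬝ᵥ x := by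
  have h := quadform_spectral P (fun _ => 1) x
  simp only [one_mul] at h
  rw [← h, diagonal_one, Matrix.mul_one, hP, one_mulVec]

/-- trace is invariant under conjugation by an orthogonal matrix -/
lemma trace_conj_eq (P M : Matrix (Fin d) (Fin d) ℝ) (hP : P * star P = 1) :
    (star P * M * P).trace = M.trace := by
  rw [trace_mul_cycle, hP, Matrix.one_mul]

/-- diagonal entries of a conjugated matrix are quadratic forms at the columns -/
lemma conj_diag_entry (P M : Matrix (Fin d) (Fin d) ℝ) (j : Fin d) :
    (star P * M * P) j j = (fun i => P i j) ⬝ᵥ M *ᵥ (fun i => P i j) := by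
  simp only [Matrix.mul_apply, Matrix.star_apply, star_trivial, dotProduct, mulVec,
    Finset.sum_mul, Finset.mul_sum]
  rw [Finset.sum_comm]
  exact Finset.sum_congr rfl fun i _ => Finset.sum_congr rfl fun k _ => by ring

/-- trace as sum of quadratic forms over columns of an orthogonal matrix -/
lemma trace_eq_sum_quadform (P M : Matrix (Fin d) (Fin d) ℝ) (hP : P * star P = 1) :
    M.trace = ∑ j, (fun i => P i j) ⬝ᵥ M *ᵥ (fun i => P i j) := by
  rw [← trace_conj_eq P M hP]
  rw [Matrix.trace]
  exact Finset.sum_congr rfl fun j _ => conj_diag_entry P M j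


lemma spectral_real {A : Matrix (Fin d) (Fin d) ℝ} (hA : A.IsHermitian) :
    A = (hA.eigenvectorUnitary : Matrix (Fin d) (Fin d) ℝ) * diagonal hA.eigenvalues *
      star (hA.eigenvectorUnitary : Matrix (Fin d) (Fin d) ℝ) := by
  have h := hA.spectral_theorem
  rwa [RCLike.ofReal_real_eq_id, Function.id_comp] at h

lemma eigUnit_mul_star {A : Matrix (Fin d) (Fin d) ℝ} (hA : A.IsHermitian) :
    (hA.eigenvectorUnitary : Matrix (Fin d) (Fin d) ℝ) *
      star (hA.eigenvectorUnitary : Matrix (Fin d) (Fin d) ℝ) = 1 :=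
  (Matrix.mem_unitaryGroup_iff).mp (hA.eigenvectorUnitary).2

lemma star_mul_eigUnit {A : Matrix (Fin d) (Fin d) ℝ} (hA : A.IsHermitian) :
    star (hA.eigenvectorUnitary : Matrix (Fin d) (Fin d) ℝ) *
      (hA.eigenvectorUnitary : Matrix (Fin d) (Fin d) ℝ) = 1 :=
  (Matrix.mem_unitaryGroup_iff').mp (hA.eigenvectorUnitary).2

lemma mpow_eq {A : Matrix (Fin d) (Fin d) ℝ} (hA : A.IsHermitian) (q : ℝ) :
    mpow A q = (hA.eigenvectorUnitary : Matrix (Fin d) (Fin d) ℝ) *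
      Matrix.diagonal (fun i => hA.eigenvalues i ^ q) *
      star (hA.eigenvectorUnitary : Matrix (Fin d) (Fin d) ℝ) := by
  rw [mpow, dif_pos hA]

lemma trace_mpow {A : Matrix (Fin d) (Fin d) ℝ} (hA : A.IsHermitian) (q : ℝ) :
    (mpow A q).trace = ∑ i, hA.eigenvalues i ^ q := by
  rw [mpow_eq hA q, trace_mul_cycle, star_mul_eigUnit hA,
    Matrix.one_mul, trace_diagonal]

lemma inv_spectral {A : Matrix (Fin d) (Fin d) ℝ} (hA : A.PosDef) :
    A⁻¹ = (hA.1.eigenvectorUnitary : Matrix (Fin d) (Fin d) ℝ) *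
      diagonal (fun i => (hA.1.eigenvalues i)⁻¹) *
      star (hA.1.eigenvectorUnitary : Matrix (Fin d) (Fin d) ℝ) := by
  apply Matrix.inv_eq_right_inv
  nth_rewrite 1 [spectral_real hA.1]
  set P := (hA.1.eigenvectorUnitary : Matrix (Fin d) (Fin d) ℝ)
  calc P * diagonal hA.1.eigenvalues * star P *
        (P * diagonal (fun i => (hA.1.eigenvalues i)⁻¹) * star P)
      = P * diagonal hA.1.eigenvalues * (star P * P) *
          diagonal (fun i => (hA.1.eigenvalues i)⁻¹) * star P := by
        simp only [Matrix.mul_assoc]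
    _ = P * (diagonal hA.1.eigenvalues * diagonal (fun i => (hA.1.eigenvalues i)⁻¹)) *
          star P := by
        rw [star_mul_eigUnit hA.1, Matrix.mul_one]
        simp only [Matrix.mul_assoc]
    _ = 1 := by
        rw [diagonal_mul_diagonal]
        have : (fun i => hA.1.eigenvalues i * (hA.1.eigenvalues i)⁻¹) = fun _ => (1:ℝ) := by
          funext i
          exact mul_inv_cancel₀ (hA.eigenvalues_pos i).ne'
        rw [this, diagonal_one, Matrix.mul_one, eigUnit_mul_star hA.1]



lemma vecMulVec_mulVec (a b x : Fin d → ℝ) : vecMulVec a b *ᵥ x = (b ⬝ᵥ x) • a := by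
  funext i
  simp only [mulVec, vecMulVec_apply, dotProduct, Pi.smul_apply, smul_eq_mul, Finset.sum_mul]
  exact Finset.sum_congr rfl fun k _ => by ring

lemma mul_vecMulVec (A : Matrix (Fin d) (Fin d) ℝ) (a b : Fin d → ℝ) :
    A * vecMulVec a b = vecMulVec (A *ᵥ a) b := by
  ext i j
  simp only [Matrix.mul_apply, vecMulVec_apply, mulVec, dotProduct, Finset.sum_mul]
  exact Finset.sum_congr rfl fun k _ => by ring

lemma vecMulVec_mul (a b : Fin d → ℝ) (A : Matrix (Fin d) (Fin d) ℝ) :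
    vecMulVec a b * A = vecMulVec a (Aᵀ *ᵥ b) := by
  ext i j
  simp only [Matrix.mul_apply, vecMulVec_apply, mulVec, dotProduct, transpose_apply,
    Finset.mul_sum]
  exact Finset.sum_congr rfl fun k _ => by ring

lemma vecMulVec_transpose (a b : Fin d → ℝ) : (vecMulVec a b)ᵀ = vecMulVec b a := by
  ext i j
  simp [vecMulVec_apply, mul_comm]

lemma vecMulVec_smul_right (a b : Fin d → ℝ) (t : ℝ) :
    vecMulVec a (t • b) = t • vecMulVec a b := by
  ext i j
  simp [vecMulVec_apply]
  ring

lemma isHermitian_vecMulVec (u : Fin d → ℝ) : (vecMulVec u u).IsHermitian := by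
  ext i j
  simp [conjTranspose_apply, vecMulVec_apply, mul_comm]

lemma posSemidef_vecMulVec (u : Fin d → ℝ) : (vecMulVec u u).PosSemidef := by
  refine .of_dotProduct_mulVec_nonneg (isHermitian_vecMulVec u) fun x => ?_
  rw [vecMulVec_mulVec]
  have hstar : star x = x := by funext i; simp
  rw [hstar, dotProduct_smul]
  have : x ⬝ᵥ u = u ⬝ᵥ x := dotProduct_comm x u
  rw [smul_eq_mul, ← this]
  exact mul_self_nonneg _

lemma posDef_add_vecMulVec {V : Matrix (Fin d) (Fin d) ℝ} (hV : V.PosDef) (u : Fin d → ℝ) :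
    (V + vecMulVec u u).PosDef :=
  hV.add_posSemidef (posSemidef_vecMulVec u)

lemma sDotNonneg {V : Matrix (Fin d) (Fin d) ℝ} (hV : V.PosDef) (u : Fin d → ℝ) :
    0 ≤ u ⬝ᵥ V⁻¹ *ᵥ u := by
  have h := hV.inv.posSemidef.dotProduct_mulVec_nonneg u
  have hstar : star u = u := by funext i; simp
  rwa [hstar] at h

lemma sDotPos {V : Matrix (Fin d) (Fin d) ℝ} (hV : V.PosDef) {u : Fin d → ℝ} (hu : u ≠ 0) :
    0 < u ⬝ᵥ V⁻¹ *ᵥ u := by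
  have h := hV.inv.dotProduct_mulVec_pos hu
  have hstar : star u = u := by funext i; simp
  rwa [hstar] at h

lemma transpose_inv_eq {V : Matrix (Fin d) (Fin d) ℝ} (hV : V.PosDef) : (V⁻¹)ᵀ = V⁻¹ := by
  have hsym : Vᵀ = V := by
    have h := hV.1
    rw [Matrix.IsHermitian] at h
    calc Vᵀ = Vᴴ := by ext i j; simp [conjTranspose_apply]
    _ = V := h
  rw [transpose_nonsing_inv, hsym]

/-- Sherman–Morrison for a symmetric rank-one update. -/
lemma sherman_morrison {V : Matrix (Fin d) (Fin d) ℝ} (hV : V.PosDef) (u : Fin d → ℝ) :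
    (V + vecMulVec u u)⁻¹ =
      V⁻¹ - (1 + u ⬝ᵥ V⁻¹ *ᵥ u)⁻¹ • vecMulVec (V⁻¹ *ᵥ u) (V⁻¹ *ᵥ u) := by
  set s := u ⬝ᵥ V⁻¹ *ᵥ u with hs_def
  set w := V⁻¹ *ᵥ u with hw_def
  set t := (1 + s)⁻¹ with ht_def
  set X := vecMulVec u w with hX_def
  have hs0 : 0 ≤ s := sDotNonneg hV u
  have h1s : (0:ℝ) < 1 + s := by linarith
  have hdet : IsUnit V.det := isUnit_iff_ne_zero.2 hV.det_pos.ne'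
  apply Matrix.inv_eq_right_inv
  have hVV : V * V⁻¹ = 1 := Matrix.mul_nonsing_inv V hdet
  have hVw : V *ᵥ w = u := by
    rw [hw_def, mulVec_mulVec, hVV, one_mulVec]
  have huV : vecMulVec u u * V⁻¹ = X := by
    rw [vecMulVec_mul, transpose_inv_eq hV, ← hw_def, hX_def]
  have hVwV : V * (t • vecMulVec w w) = t • X := by
    rw [Matrix.mul_smul, mul_vecMulVec, hVw, hX_def]
  have huu_ww : vecMulVec u u * (t • vecMulVec w w) = (t * s) • X := by
    rw [Matrix.mul_smul, vecMulVec_mul, vecMulVec_transpose, vecMulVec_mulVec]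
    have hwu : w ⬝ᵥ u = s := by rw [dotProduct_comm, ← hs_def]
    rw [hwu, vecMulVec_smul_right, hX_def, smul_smul, mul_comm]
  have hts : (t * s) • X = X - t • X := by
    have h : t * s = 1 - t := by
      rw [ht_def]
      field_simp
      ring
    rw [h, sub_smul, one_smul]
  calc (V + vecMulVec u u) * (V⁻¹ - t • vecMulVec w w)
      = V * V⁻¹ - V * (t • vecMulVec w w)
        + (vecMulVec u u * V⁻¹ - vecMulVec u u * (t • vecMulVec w w)) := by
        rw [Matrix.add_mul, Matrix.mul_sub, Matrix.mul_sub]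
    _ = 1 - t • X + (X - (t * s) • X) := by rw [hVV, hVwV, huV, huu_ww]
    _ = 1 := by rw [hts]; abel



lemma det_add_vecMulVec' {V : Matrix (Fin d) (Fin d) ℝ} (hV : V.PosDef) (u : Fin d → ℝ) :
    (V + vecMulVec u u).det = V.det * (1 + u ⬝ᵥ V⁻¹ *ᵥ u) := by
  have hdet : IsUnit V.det := isUnit_iff_ne_zero.2 hV.det_pos.ne'
  rw [vecMulVec_eq Unit u u, det_add_replicateCol_mul_replicateRow hdet u u]
  congr 1
  rw [det_unique]
  simp only [Pi.add_apply, Matrix.add_apply, Matrix.one_apply_eq, Matrix.mul_apply, replicateRow_apply,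
    replicateCol_apply, dotProduct, mulVec, Finset.sum_mul, Finset.mul_sum]
  congr 1
  rw [Finset.sum_comm]
  exact Finset.sum_congr rfl fun i _ => Finset.sum_congr rfl fun k _ => by ring

lemma inv_spectral' {A : Matrix (Fin d) (Fin d) ℝ} (hA : A.IsHermitian)
    (hpos : ∀ i, 0 < hA.eigenvalues i) :
    A⁻¹ = (hA.eigenvectorUnitary : Matrix (Fin d) (Fin d) ℝ) *
      diagonal (fun i => (hA.eigenvalues i)⁻¹) *
      star (hA.eigenvectorUnitary : Matrix (Fin d) (Fin d) ℝ) := by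
  apply Matrix.inv_eq_right_inv
  nth_rewrite 1 [spectral_real hA]
  set P := (hA.eigenvectorUnitary : Matrix (Fin d) (Fin d) ℝ)
  calc P * diagonal hA.eigenvalues * star P *
        (P * diagonal (fun i => (hA.eigenvalues i)⁻¹) * star P)
      = P * diagonal hA.eigenvalues * (star P * P) *
          diagonal (fun i => (hA.eigenvalues i)⁻¹) * star P := by
        simp only [Matrix.mul_assoc]
    _ = P * (diagonal hA.eigenvalues * diagonal (fun i => (hA.eigenvalues i)⁻¹)) *
          star P := by
        rw [star_mul_eigUnit hA, Matrix.mul_one]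
        simp only [Matrix.mul_assoc]
    _ = 1 := by
        rw [diagonal_mul_diagonal]
        have : (fun i => hA.eigenvalues i * (hA.eigenvalues i)⁻¹) = fun _ => (1:ℝ) := by
          funext i
          exact mul_inv_cancel₀ (hpos i).ne'
        rw [this, diagonal_one, Matrix.mul_one, eigUnit_mul_star hA]

lemma quadform_mpow_le {B : Matrix (Fin d) (Fin d) ℝ} (hB : B.PosDef) {x : Fin d → ℝ}
    (hx : x ⬝ᵥ x = 1) {p : ℝ} (hp0 : 0 < p) (hp1 : p ≤ 1) :
    x ⬝ᵥ (mpow B (-p)) *ᵥ x ≤ (x ⬝ᵥ B⁻¹ *ᵥ x) ^ p := by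
  have hBH : B.IsHermitian := hB.1
  have hpos : ∀ i, 0 < hBH.eigenvalues i := fun i => hB.eigenvalues_pos i
  have hsum : ∑ k, ((star (hBH.eigenvectorUnitary : Matrix (Fin d) (Fin d) ℝ) *ᵥ x) k) ^ 2
      = 1 := by
    rw [sum_sq_star_mulVec _ (eigUnit_mul_star hBH) x, hx]
  have hL : x ⬝ᵥ (mpow B (-p)) *ᵥ x
      = ∑ k, ((star (hBH.eigenvectorUnitary : Matrix (Fin d) (Fin d) ℝ) *ᵥ x) k) ^ 2 *
          (hBH.eigenvalues k) ^ (-p) := by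
    rw [mpow_eq hBH, quadform_spectral]
    exact Finset.sum_congr rfl fun k _ => by ring
  have hR : x ⬝ᵥ B⁻¹ *ᵥ x
      = ∑ k, ((star (hBH.eigenvectorUnitary : Matrix (Fin d) (Fin d) ℝ) *ᵥ x) k) ^ 2 *
          (hBH.eigenvalues k)⁻¹ := by
    rw [inv_spectral' hBH hpos, quadform_spectral]
    exact Finset.sum_congr rfl fun k _ => by ring
  rw [hL, hR]
  exact jensen_upper _ _ hpos hsum hp0 hp1

lemma trace_mpow_diff_ge {V : Matrix (Fin d) (Fin d) ℝ} (hV : V.PosDef) {u : Fin d → ℝ}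
    (hu1 : u ⬝ᵥ u ≤ 1) (hu0 : u ≠ 0) {p : ℝ} (hp0 : 0 < p) (hp1 : p ≤ 1) :
    p * (u ⬝ᵥ V⁻¹ *ᵥ u) ^ (1 + p) / (1 + u ⬝ᵥ V⁻¹ *ᵥ u)
      ≤ (mpow V (-p)).trace - (mpow (V + vecMulVec u u) (-p)).trace := by
  have hVH : V.IsHermitian := hV.1
  have hW : (V + vecMulVec u u).PosDef := posDef_add_vecMulVec hV u
  have hdet : IsUnit V.det := isUnit_iff_ne_zero.2 hV.det_pos.ne'
  have hLpos : ∀ j, 0 < hVH.eigenvalues j := fun j => hV.eigenvalues_pos j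
  have hspos : 0 < u ⬝ᵥ V⁻¹ *ᵥ u := sDotPos hV hu0
  set P : Matrix (Fin d) (Fin d) ℝ := (hVH.eigenvectorUnitary : Matrix (Fin d) (Fin d) ℝ)
    with hP_def
  set L : Fin d → ℝ := hVH.eigenvalues with hL_def
  set v : Fin d → Fin d → ℝ := fun j i => P i j with hv_def
  set c : Fin d → ℝ := fun j => ((v j) ⬝ᵥ u) ^ 2 with hc_def
  set s : ℝ := u ⬝ᵥ V⁻¹ *ᵥ u with hs_def
  have h1s : (0:ℝ) < 1 + s := by linarith
  have hstarPu : ∀ j, (star P *ᵥ u) j = (v j) ⬝ᵥ u := by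
    intro j
    simp [mulVec, dotProduct, Matrix.star_apply, hv_def]
  have hvv : ∀ j, (v j) ⬝ᵥ (v j) = 1 := by
    intro j
    have h : (star P * P) j j = (1 : Matrix (Fin d) (Fin d) ℝ) j j := by
      rw [hP_def, star_mul_eigUnit hVH]
    rw [Matrix.one_apply_eq] at h
    rw [← h]
    simp [Matrix.mul_apply, Matrix.star_apply, dotProduct, hv_def, sq]
  have hc_sum : ∑ j, c j = u ⬝ᵥ u := by
    rw [← sum_sq_star_mulVec P (by rw [hP_def]; exact eigUnit_mul_star hVH) u]
    exact Finset.sum_congr rfl fun j _ => by rw [hstarPu j]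
  have hs_sum : s = ∑ j, c j * (L j)⁻¹ := by
    rw [hs_def]
    conv_lhs => rw [inv_spectral' hVH hLpos]
    rw [← hP_def, quadform_spectral]
    refine Finset.sum_congr rfl fun j _ => ?_
    rw [hstarPu j, hc_def, hL_def]
    ring
  have hVcol : ∀ j, V *ᵥ (v j) = L j • (v j) := by
    intro j
    have hcol : v j = ⇑(hVH.eigenvectorBasis j) := by
      funext i
      rw [hv_def]
      simp [hP_def]
    rw [hcol, hL_def]
    exact hVH.mulVec_eigenvectorBasis j
  have hVinv_col : ∀ j, V⁻¹ *ᵥ (v j) = (L j)⁻¹ • (v j) := by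
    intro j
    have h1 : V⁻¹ *ᵥ (V *ᵥ (v j)) = v j := by
      rw [mulVec_mulVec, Matrix.nonsing_inv_mul V hdet, one_mulVec]
    rw [hVcol j, mulVec_smul] at h1
    calc V⁻¹ *ᵥ (v j) = ((L j)⁻¹ * L j) • (V⁻¹ *ᵥ (v j)) := by
          rw [inv_mul_cancel₀ (hLpos j).ne', one_smul]
      _ = (L j)⁻¹ • (L j • (V⁻¹ *ᵥ (v j))) := by rw [← smul_smul]
      _ = (L j)⁻¹ • (v j) := by rw [h1]
  have hvVinv : ∀ j, (v j) ⬝ᵥ V⁻¹ *ᵥ (v j) = (L j)⁻¹ := by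
    intro j
    rw [hVinv_col j, dotProduct_smul, hvv j, smul_eq_mul, mul_one]
  have hwdot : ∀ j, (V⁻¹ *ᵥ u) ⬝ᵥ (v j) = (L j)⁻¹ * ((v j) ⬝ᵥ u) := by
    intro j
    rw [dotProduct_comm, dotProduct_mulVec, ← transpose_transpose V⁻¹, vecMul_transpose,
      transpose_inv_eq hV, hVinv_col j, smul_dotProduct, smul_eq_mul]
  have hWinv : ∀ j, (v j) ⬝ᵥ (V + vecMulVec u u)⁻¹ *ᵥ (v j)
      = (L j)⁻¹ - (1 + s)⁻¹ * (((L j)⁻¹) ^ 2 * c j) := by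
    intro j
    rw [sherman_morrison hV u, ← hs_def, sub_mulVec, dotProduct_sub, smul_mulVec,
      dotProduct_smul, vecMulVec_mulVec, dotProduct_smul, hvVinv j]
    have hcomm : (V⁻¹ *ᵥ u) ⬝ᵥ (v j) = (v j) ⬝ᵥ (V⁻¹ *ᵥ u) := dotProduct_comm _ _
    rw [← hcomm, hwdot j, hc_def]
    simp only [smul_eq_mul]
    ring
  have hkey : ∀ j, p * ((1 + s)⁻¹ * (c j * (L j) ^ (-(1 + p))))
      ≤ L j ^ (-p) - ((v j) ⬝ᵥ (V + vecMulVec u u)⁻¹ *ᵥ (v j)) ^ p := by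
    intro j
    have hcj : 0 ≤ c j := by rw [hc_def]; exact sq_nonneg _
    have hlinv : 0 < (L j)⁻¹ := inv_pos.2 (hLpos j)
    set q : ℝ := (1 + s)⁻¹ * ((L j)⁻¹ * c j) with hq_def
    have hq0 : 0 ≤ q := by
      rw [hq_def]
      positivity
    have hcl : c j * (L j)⁻¹ ≤ s := by
      rw [hs_sum]
      exact Finset.single_le_sum
        (f := fun j => c j * (L j)⁻¹)
        (fun i _ => mul_nonneg (by rw [hc_def]; exact sq_nonneg _) (inv_pos.2 (hLpos i)).le)
        (Finset.mem_univ j)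
    have hq1 : q ≤ s / (1 + s) := by
      rw [hq_def, div_eq_inv_mul]
      apply mul_le_mul_of_nonneg_left _ (inv_pos.2 h1s).le
      rw [mul_comm]
      exact hcl
    have hqlt1 : q < 1 := lt_of_le_of_lt hq1 (by rw [div_lt_one h1s]; linarith)
    have hWq : (v j) ⬝ᵥ (V + vecMulVec u u)⁻¹ *ᵥ (v j) = (L j)⁻¹ * (1 - q) := by
      rw [hWinv j, hq_def]
      ring
    have hb : (1 - q) ^ p ≤ 1 - p * q := by
      have h := rpow_one_add_le_one_add_mul_self (s := -q) (by linarith) hp0.le hp1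
      rw [← sub_eq_add_neg] at h
      calc (1 - q) ^ p ≤ 1 + p * (-q) := h
        _ = 1 - p * q := by ring
    have hmul : ((L j)⁻¹ * (1 - q)) ^ p = ((L j)⁻¹) ^ p * (1 - q) ^ p :=
      Real.mul_rpow hlinv.le (by linarith)
    have hLp : L j ^ (-p) = ((L j)⁻¹) ^ p := by
      rw [Real.rpow_neg (hLpos j).le, ← Real.inv_rpow (hLpos j).le]
    have hLip : L j ^ (-(1 + p)) = ((L j)⁻¹) ^ p * (L j)⁻¹ := by
      have e1 : ((L j)⁻¹) ^ (p + 1) = ((L j)⁻¹) ^ p * (L j)⁻¹ := by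
        rw [Real.rpow_add hlinv, Real.rpow_one]
      have e2 : L j ^ (-(1 + p)) = ((L j)⁻¹) ^ (p + 1) := by
        rw [Real.rpow_neg (hLpos j).le, ← Real.inv_rpow (hLpos j).le]
        congr 1
        ring
      rw [e2, e1]
    have hApos : 0 < ((L j)⁻¹) ^ p := Real.rpow_pos_of_pos hlinv p
    have h5 : ((L j)⁻¹) ^ p * (1 - q) ^ p ≤ ((L j)⁻¹) ^ p * (1 - p * q) :=
      mul_le_mul_of_nonneg_left hb hApos.le
    have hLHS : p * ((1 + s)⁻¹ * (c j * (L j) ^ (-(1 + p))))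
        = ((L j)⁻¹) ^ p * (p * q) := by
      rw [hLip, hq_def]
      ring
    rw [hWq, hmul, hLp, hLHS]
    nlinarith [h5]
  have htrV : (mpow V (-p)).trace = ∑ j, L j ^ (-p) := by
    rw [hL_def]
    exact trace_mpow hVH (-p)
  have htrW : (mpow (V + vecMulVec u u) (-p)).trace
      = ∑ j, (v j) ⬝ᵥ (mpow (V + vecMulVec u u) (-p)) *ᵥ (v j) := by
    have h := trace_eq_sum_quadform P (mpow (V + vecMulVec u u) (-p))
      (by rw [hP_def]; exact eigUnit_mul_star hVH)
    exact h
  have hWj : ∀ j, (v j) ⬝ᵥ (mpow (V + vecMulVec u u) (-p)) *ᵥ (v j)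
      ≤ ((v j) ⬝ᵥ (V + vecMulVec u u)⁻¹ *ᵥ (v j)) ^ p :=
    fun j => quadform_mpow_le hW (hvv j) hp0 hp1
  calc p * s ^ (1 + p) / (1 + s)
      = p * ((1 + s)⁻¹ * s ^ (1 + p)) := by ring
    _ ≤ p * ((1 + s)⁻¹ * ∑ j, c j * L j ^ (-(1 + p))) := by
        apply mul_le_mul_of_nonneg_left _ hp0.le
        apply mul_le_mul_of_nonneg_left _ (inv_pos.2 h1s).le
        have hjl := jensen_lower c L (fun k => by rw [hc_def]; exact sq_nonneg _) hLpos
          (by rw [hc_sum]; exact hu1) (q := 1 + p) (by linarith)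
          (by rw [← hs_sum]; exact hspos)
        rw [← hs_sum] at hjl
        exact hjl
    _ = ∑ j, p * ((1 + s)⁻¹ * (c j * L j ^ (-(1 + p)))) := by
        rw [Finset.mul_sum, Finset.mul_sum]
    _ ≤ ∑ j, (L j ^ (-p) - ((v j) ⬝ᵥ (V + vecMulVec u u)⁻¹ *ᵥ (v j)) ^ p) :=
        Finset.sum_le_sum fun j _ => hkey j
    _ ≤ ∑ j, (L j ^ (-p) - (v j) ⬝ᵥ (mpow (V + vecMulVec u u) (-p)) *ᵥ (v j)) := by
        apply Finset.sum_le_sum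
        intro j _
        have := hWj j
        linarith
    _ = (mpow V (-p)).trace - (mpow (V + vecMulVec u u) (-p)).trace := by
        rw [Finset.sum_sub_distrib, ← htrV, ← htrW]

end Helpers


/-- Unconditional per-step bound in the proof of the generalized elliptical
potential lemma. -/
theorem per_step_bound {d : ℕ} (V : Matrix (Fin d) (Fin d) ℝ) (hV : V.PosDef)
    (u : Fin d → ℝ) (hu : Real.sqrt (u ⬝ᵥ u) ≤ 1)
    (p : ℝ) (hp0 : 0 < p) (hp1 : p ≤ 1) :
    mnorm V⁻¹ u ^ (2 * p) ≤
      (2 * Real.log ((V + vecMulVec u u).det / V.det)) ^ p +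
        3 / (2 * p) * ((mpow V (-p)).trace - (mpow (V + vecMulVec u u) (-p)).trace) := by
  by_cases hu0 : u = 0
  · subst hu0
    have hvv0 : vecMulVec (0 : Fin d → ℝ) (0 : Fin d → ℝ) = (0 : Matrix (Fin d) (Fin d) ℝ) := by
      ext i j; simp [vecMulVec_apply]
    rw [hvv0, add_zero, div_self hV.det_pos.ne', Real.log_one, mul_zero, sub_self, mul_zero,
      add_zero, Real.zero_rpow hp0.ne']
    have hm0 : mnorm V⁻¹ (0 : Fin d → ℝ) = 0 := by
      rw [mnorm, zero_dotProduct, Real.sqrt_zero]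
    rw [hm0, Real.zero_rpow (by positivity)]
  · have hspos := sDotPos hV hu0
    have hs0 : (0:ℝ) ≤ u ⬝ᵥ V⁻¹ *ᵥ u := hspos.le
    have hu1 : u ⬝ᵥ u ≤ 1 := by
      have hnn : 0 ≤ u ⬝ᵥ u := Finset.sum_nonneg fun i _ => mul_self_nonneg (u i)
      nlinarith [Real.sq_sqrt hnn, Real.sqrt_nonneg (u ⬝ᵥ u), hu]
    have hLHS : mnorm V⁻¹ u ^ (2 * p) = (u ⬝ᵥ V⁻¹ *ᵥ u) ^ p := by
      rw [mnorm, Real.sqrt_eq_rpow, ← Real.rpow_mul hs0]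
      congr 1
      ring
    have hdet_eq : (V + vecMulVec u u).det / V.det = 1 + u ⬝ᵥ V⁻¹ *ᵥ u := by
      rw [det_add_vecMulVec' hV u, mul_comm, mul_div_assoc, div_self hV.det_pos.ne', mul_one]
    rw [hLHS, hdet_eq]
    have h1 := scalar_key hs0 hp0 hp1
    have h2 := trace_mpow_diff_ge hV hu1 hu0 hp0 hp1
    have h3 : 3 / (2 * p) * (p * (u ⬝ᵥ V⁻¹ *ᵥ u) ^ (1 + p) / (1 + u ⬝ᵥ V⁻¹ *ᵥ u))
        = 3 / 2 * ((u ⬝ᵥ V⁻¹ *ᵥ u) ^ (1 + p) / (1 + u ⬝ᵥ V⁻¹ *ᵥ u)) := by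
      have hp' : p ≠ 0 := hp0.ne'
      rw [show (3:ℝ) / (2 * p) * (p * (u ⬝ᵥ V⁻¹ *ᵥ u) ^ (1 + p) / (1 + u ⬝ᵥ V⁻¹ *ᵥ u))
          = 3 / (2 * p) * p * ((u ⬝ᵥ V⁻¹ *ᵥ u) ^ (1 + p) / (1 + u ⬝ᵥ V⁻¹ *ᵥ u)) from by ring,
        show (3:ℝ) / (2 * p) * p = 3 / 2 from by field_simp]
    have h4 : 3 / (2 * p) * (p * (u ⬝ᵥ V⁻¹ *ᵥ u) ^ (1 + p) / (1 + u ⬝ᵥ V⁻¹ *ᵥ u))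
        ≤ 3 / (2 * p) * ((mpow V (-p)).trace - (mpow (V + vecMulVec u u) (-p)).trace) :=
      mul_le_mul_of_nonneg_left h2 (by positivity)
    linarith
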